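/- Let steps : Fin 5 → ℕ×ℕ be given by steps = ((6,5), (0,1), (1,1), (3,3), (3,3)), and for a, b ∈ ℕ let N(a,b) be the number of finite lists ℓ of elements of Fin 5 whose componentwise sum of steps equals (a,b). Then the diagonal generating function D = Σ_{n≥0} N(n,n) X^n ∈ ℤ⟦X⟧ satisfies D² · (4X⁴ − 4X³ + X² − 2X + 1) = 1 in ℤ⟦X⟧, i.e. Σ_n N(n,n) t^n = 1/√(4t⁴ − 4t³ + t² − 2t + 1). -/

import Mathlib

open PowerSeries

/-- The colored step set `S = {(6,5),(0,1),(1,1),(3,3)}` with `(3,3)` having two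
    colors (so it is listed twice). -/
def steps : Fin 5 → ℕ × ℕ := ![(6, 5), (0, 1), (1, 1), (3, 3), (3, 3)]

/-- `N(a,b)`: the number of colored lattice paths (lists of colored steps) whose
    componentwise sum of steps is `(a, b)`. -/
noncomputable def N (a b : ℕ) : ℕ :=
  Nat.card {ℓ : List (Fin 5) // (ℓ.map steps).sum = (a, b)}

namespace DiagAux

/-- Symmetrized weight: on balanced words it agrees with the `x`-weight. -/
def wt : Fin 5 → ℕ := ![3, 3, 1, 3, 3]

def w (ℓ : List (Fin 5)) : ℕ := (ℓ.map wt).sum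

/-- Excess of letter `1` over letter `0`. -/
def exc (ℓ : List (Fin 5)) : ℤ := (ℓ.count 1 : ℤ) - (ℓ.count 0 : ℤ)

def Bal (ℓ : List (Fin 5)) : Prop := exc ℓ = 0

def Fp (ℓ : List (Fin 5)) : Prop :=
  exc ℓ = 1 ∧ ∀ k < ℓ.length, exc (ℓ.take k) ≤ 0

noncomputable def cnt (P : List (Fin 5) → Prop) (n : ℕ) : ℕ :=
  Nat.card {ℓ : List (Fin 5) // P ℓ ∧ w ℓ = n}

noncomputable def ser (P : List (Fin 5) → Prop) : ℤ⟦X⟧ :=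
  PowerSeries.mk fun n => (cnt P n : ℤ)

@[simp] lemma w_nil : w [] = 0 := rfl

@[simp] lemma w_cons (x : Fin 5) (ℓ : List (Fin 5)) : w (x :: ℓ) = wt x + w ℓ := by
  simp [w]

lemma w_append (u v : List (Fin 5)) : w (u ++ v) = w u + w v := by
  simp [w]

@[simp] lemma exc_nil : exc [] = 0 := by simp [exc]

lemma exc_cons (x : Fin 5) (ℓ : List (Fin 5)) :
    exc (x :: ℓ) = exc ℓ + (if x = 1 then 1 else 0) - (if x = 0 then 1 else 0) := by
  simp only [exc, List.count_cons]
  split_ifs <;> simp_all <;> ring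

@[simp] lemma exc_cons0 (ℓ : List (Fin 5)) : exc ((0 : Fin 5) :: ℓ) = exc ℓ - 1 := by
  rw [exc_cons, if_neg (by decide), if_pos rfl]; ring

@[simp] lemma exc_cons1 (ℓ : List (Fin 5)) : exc ((1 : Fin 5) :: ℓ) = exc ℓ + 1 := by
  rw [exc_cons, if_pos rfl, if_neg (by decide)]; ring

lemma exc_cons_other {x : Fin 5} (hx0 : x ≠ 0) (hx1 : x ≠ 1) (ℓ : List (Fin 5)) :
    exc (x :: ℓ) = exc ℓ := by
  rw [exc_cons, if_neg hx1, if_neg hx0]; ring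

lemma exc_append (u v : List (Fin 5)) : exc (u ++ v) = exc u + exc v := by
  simp [exc, List.count_append]; ring

lemma one_le_wt (x : Fin 5) : 1 ≤ wt x := by fin_cases x <;> decide

lemma length_le_w (ℓ : List (Fin 5)) : ℓ.length ≤ w ℓ := by
  induction ℓ with
  | nil => simp
  | cons x t ih =>
    have := one_le_wt x
    simp only [List.length_cons, w_cons]
    omega

instance finite_cnt (P : List (Fin 5) → Prop) (c n : ℕ) :
    Finite {ℓ : List (Fin 5) // P ℓ ∧ c + w ℓ = n} := by
  have hsub : {ℓ : List (Fin 5) | P ℓ ∧ c + w ℓ = n} ⊆ {ℓ : List (Fin 5) | ℓ.length ≤ n} := by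
    intro ℓ h
    have := length_le_w ℓ
    simp only [Set.mem_setOf_eq] at h ⊢
    omega
  exact ((List.finite_length_le (Fin 5) n).subset hsub).to_subtype

instance finite_cnt' (P : List (Fin 5) → Prop) (n : ℕ) :
    Finite {ℓ : List (Fin 5) // P ℓ ∧ w ℓ = n} := by
  have hsub : {ℓ : List (Fin 5) | P ℓ ∧ w ℓ = n} ⊆ {ℓ : List (Fin 5) | ℓ.length ≤ n} := by
    intro ℓ h
    have := length_le_w ℓ
    simp only [Set.mem_setOf_eq] at h ⊢
    omega
  exact ((List.finite_length_le (Fin 5) n).subset hsub).to_subtype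

lemma natCard_sigma {ι : Type*} [Fintype ι] (T : ι → Type*) [∀ i, Finite (T i)] :
    Nat.card (Σ i, T i) = ∑ i, Nat.card (T i) := by
  letI : ∀ i, Fintype (T i) := fun i => Fintype.ofFinite _
  simp [Nat.card_eq_fintype_card, Fintype.card_sigma]

lemma cnt_congr (P Q : List (Fin 5) → Prop) (h : ∀ ℓ, P ℓ ↔ Q ℓ) (n : ℕ) :
    cnt P n = cnt Q n :=
  Nat.card_congr (Equiv.subtypeEquivRight fun ℓ => by rw [h ℓ])

lemma ser_congr {P Q : List (Fin 5) → Prop} (h : ∀ ℓ, P ℓ ↔ Q ℓ) : ser P = ser Q := by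
  ext n
  simp [ser, cnt_congr P Q h]

lemma cnt_shift (P : List (Fin 5) → Prop) (c n : ℕ) :
    Nat.card {ℓ : List (Fin 5) // P ℓ ∧ c + w ℓ = n}
      = if c ≤ n then cnt P (n - c) else 0 := by
  split_ifs with h
  · exact Nat.card_congr (Equiv.subtypeEquivRight fun ℓ => by
      constructor <;> rintro ⟨h1, h2⟩ <;> exact ⟨h1, by omega⟩)
  · have : IsEmpty {ℓ : List (Fin 5) // P ℓ ∧ c + w ℓ = n} :=
      ⟨fun x => by have := x.2.2; omega⟩
    simp [Nat.card_of_isEmpty]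

open scoped Classical in
lemma natCard_punit (p : Prop) : Nat.card {_u : Unit // p} = if p then 1 else 0 := by
  split_ifs with h
  · haveI : Unique {_u : Unit // p} :=
      ⟨⟨⟨⟨⟩, h⟩⟩, fun a => Subtype.ext (Subsingleton.elim _ _)⟩
    exact Nat.card_unique
  · haveI : IsEmpty {_u : Unit // p} := ⟨fun x => h x.2⟩
    exact Nat.card_of_isEmpty

open scoped Classical in
/-- One-letter decomposition of a counting series. -/
lemma ser_cons (P : List (Fin 5) → Prop) :
    ser P = (if P [] then 1 else 0)
      + ∑ x : Fin 5, X ^ (wt x) * ser (fun ℓ => P (x :: ℓ)) := by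
  ext n
  have key : cnt P n
      = (if P [] ∧ 0 = n then 1 else 0)
        + ∑ x : Fin 5, Nat.card {ℓ : List (Fin 5) // P (x :: ℓ) ∧ wt x + w ℓ = n} := by
    have e : ({_u : Unit // P [] ∧ 0 = n}
          ⊕ Σ x : Fin 5, {ℓ : List (Fin 5) // P (x :: ℓ) ∧ wt x + w ℓ = n})
        ≃ {ℓ : List (Fin 5) // P ℓ ∧ w ℓ = n} := by
      refine Equiv.ofBijective (fun s => match s with
        | Sum.inl ⟨_, h⟩ => ⟨[], h.1, by simpa using h.2⟩
        | Sum.inr ⟨x, ℓ, h⟩ => ⟨x :: ℓ, h.1, by simpa using h.2⟩) ⟨?_, ?_⟩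
      · rintro (⟨⟨⟩, h⟩ | ⟨x, ℓ, h⟩) (⟨⟨⟩, h'⟩ | ⟨x', ℓ', h'⟩) heq <;>
          simp only [Subtype.mk.injEq] at heq
        · rfl
        · exact absurd heq (by simp)
        · exact absurd heq (by simp)
        · obtain ⟨rfl, rfl⟩ : x = x' ∧ ℓ = ℓ' := by
            constructor <;> injection heq
          rfl
      · rintro ⟨(_ | ⟨x, ℓ⟩), hP, hw⟩
        · exact ⟨Sum.inl ⟨⟨⟩, hP, by simpa using hw⟩, rfl⟩
        · exact ⟨Sum.inr ⟨x, ℓ, hP, by simpa using hw⟩, rfl⟩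
    rw [cnt, ← Nat.card_congr e, Nat.card_sum, natCard_sigma, natCard_punit]
    congr 1
    split_ifs <;> rfl
  have lhs : (coeff n) (ser P) = ((cnt P n : ℕ) : ℤ) := by rw [ser, coeff_mk]
  rw [lhs, key]
  push_cast
  rw [map_add, map_sum]
  congr 1
  · by_cases hP : P [] <;> by_cases hn : n = 0
    · simp [hP, hn]
    · simp [hP, coeff_one, hn, Ne.symm hn]
    · simp [hP]
    · simp [hP]
  · refine Finset.sum_congr rfl fun x _ => ?_
    rw [coeff_X_pow_mul', cnt_shift]
    split_ifs <;> simp [ser, coeff_mk]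

/-- Convolution: if the words satisfying `U` split as (word in `S`) ++ (word in `T`),
    the counting series multiply. -/
lemma ser_conv (S T U : List (Fin 5) → Prop)
    (E : {ℓ : List (Fin 5) // U ℓ} ≃ {u : List (Fin 5) // S u} × {v : List (Fin 5) // T v})
    (hE : ∀ x, ((E x).1.1 ++ (E x).2.1) = x.1) :
    ser U = ser S * ser T := by
  have hw0 : ∀ x : {ℓ : List (Fin 5) // U ℓ}, w x.1 = w (E x).1.1 + w (E x).2.1 := by
    intro x
    rw [← w_append, hE x]
  have hwℓ : ∀ (ℓ : List (Fin 5)) (h : U ℓ),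
      w ℓ = w (E ⟨ℓ, h⟩).1.1 + w (E ⟨ℓ, h⟩).2.1 := fun ℓ h => hw0 ⟨ℓ, h⟩
  ext n
  have key : cnt U n = ∑ k : Fin (n + 1), cnt S k * cnt T (n - k) := by
    have e : (Σ k : Fin (n + 1),
          {u : List (Fin 5) // S u ∧ w u = (k : ℕ)} ×
            {v : List (Fin 5) // T v ∧ w v = n - (k : ℕ)})
        ≃ {ℓ : List (Fin 5) // U ℓ ∧ w ℓ = n} := by
      refine Equiv.ofBijective (fun s =>
        ⟨(E.symm (⟨s.2.1.1, s.2.1.2.1⟩, ⟨s.2.2.1, s.2.2.2.1⟩)).1,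
         (E.symm (⟨s.2.1.1, s.2.1.2.1⟩, ⟨s.2.2.1, s.2.2.2.1⟩)).2, ?_⟩) ⟨?_, ?_⟩
      · have h0 := hw0 (E.symm (⟨s.2.1.1, s.2.1.2.1⟩, ⟨s.2.2.1, s.2.2.2.1⟩))
        rw [Equiv.apply_symm_apply] at h0
        have h0' : w (E.symm (⟨s.2.1.1, s.2.1.2.1⟩, ⟨s.2.2.1, s.2.2.2.1⟩)).1
            = w s.2.1.1 + w s.2.2.1 := h0
        have h1 : w s.2.1.1 = (s.1 : ℕ) := s.2.1.2.2
        have h2 : w s.2.2.1 = n - (s.1 : ℕ) := s.2.2.2.2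
        have h3 := s.1.isLt
        omega
      · rintro ⟨k, ⟨u, hu, hku⟩, ⟨v, hv, hkv⟩⟩ ⟨k', ⟨u', hu', hku'⟩, ⟨v', hv', hkv'⟩⟩ h
        simp only [Subtype.mk.injEq] at h
        have h2 := E.symm.injective (Subtype.ext h)
        simp only [Prod.mk.injEq, Subtype.mk.injEq] at h2
        obtain ⟨rfl, rfl⟩ := h2
        have : k = k' := Fin.ext (by omega)
        subst this
        rfl
      · rintro ⟨ℓ, hU, hwn⟩
        have hb : w (E ⟨ℓ, hU⟩).1.1 < n + 1 := by
          have := hwℓ ℓ hU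
          omega
        refine ⟨⟨⟨w (E ⟨ℓ, hU⟩).1.1, hb⟩,
          ⟨(E ⟨ℓ, hU⟩).1.1, (E ⟨ℓ, hU⟩).1.2, rfl⟩,
          ⟨(E ⟨ℓ, hU⟩).2.1, (E ⟨ℓ, hU⟩).2.2, by
            show w (E ⟨ℓ, hU⟩).2.1 = n - w (E ⟨ℓ, hU⟩).1.1
            have := hwℓ ℓ hU
            omega⟩⟩, ?_⟩
        apply Subtype.ext
        show (E.symm (⟨(E ⟨ℓ, hU⟩).1.1, (E ⟨ℓ, hU⟩).1.2⟩, ⟨(E ⟨ℓ, hU⟩).2.1, (E ⟨ℓ, hU⟩).2.2⟩)).1 = ℓ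
        rw [show ((⟨(E ⟨ℓ, hU⟩).1.1, (E ⟨ℓ, hU⟩).1.2⟩ : {u : List (Fin 5) // S u}),
              (⟨(E ⟨ℓ, hU⟩).2.1, (E ⟨ℓ, hU⟩).2.2⟩ : {v : List (Fin 5) // T v}))
            = E ⟨ℓ, hU⟩ from rfl, Equiv.symm_apply_apply]
    rw [cnt, ← Nat.card_congr e, natCard_sigma]
    refine Finset.sum_congr rfl fun k _ => ?_
    rw [Nat.card_prod, cnt, cnt]
  have lhs : (coeff n) (ser U) = ((cnt U n : ℕ) : ℤ) := by rw [ser, coeff_mk]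
  rw [lhs, key, coeff_mul, Finset.Nat.sum_antidiagonal_eq_sum_range_succ_mk]
  push_cast
  rw [← Fin.sum_univ_eq_sum_range
    (fun k => (coeff k) (ser S) * (coeff (n - k)) (ser T)) (n + 1)]
  refine Finset.sum_congr rfl fun k _ => ?_
  simp [ser, coeff_mk]


/-! ### Characterizations of `Bal` and `Fp` after prepending a letter -/

lemma Bal_nil : Bal ([] : List (Fin 5)) := by simp [Bal]

lemma Bal_cons0 (ℓ : List (Fin 5)) : Bal ((0 : Fin 5) :: ℓ) ↔ exc ℓ = 1 := by
  rw [Bal, exc_cons0]; omega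

lemma Bal_cons1 (ℓ : List (Fin 5)) : Bal ((1 : Fin 5) :: ℓ) ↔ exc ℓ = -1 := by
  rw [Bal, exc_cons1]; omega

lemma Bal_cons_other {x : Fin 5} (hx0 : x ≠ 0) (hx1 : x ≠ 1) (ℓ : List (Fin 5)) :
    Bal (x :: ℓ) ↔ Bal ℓ := by
  rw [Bal, Bal, exc_cons_other hx0 hx1]

lemma Fp_cons_other {x : Fin 5} (hx0 : x ≠ 0) (hx1 : x ≠ 1) (ℓ : List (Fin 5)) :
    Fp (x :: ℓ) ↔ Fp ℓ := by
  unfold Fp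
  rw [exc_cons_other hx0 hx1]
  constructor
  · rintro ⟨h1, h2⟩
    refine ⟨h1, fun k hk => ?_⟩
    have := h2 (k + 1) (by simp only [List.length_cons]; omega)
    rwa [List.take_succ_cons, exc_cons_other hx0 hx1] at this
  · rintro ⟨h1, h2⟩
    refine ⟨h1, fun k hk => ?_⟩
    cases k with
    | zero => simp
    | succ j =>
      rw [List.take_succ_cons, exc_cons_other hx0 hx1]
      exact h2 j (by simp only [List.length_cons] at hk; omega)

lemma Fp_cons1 (ℓ : List (Fin 5)) : Fp ((1 : Fin 5) :: ℓ) ↔ ℓ = [] := by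
  constructor
  · rintro ⟨h1, h2⟩
    by_contra hne
    have hlen : 0 < ℓ.length := List.length_pos_iff.mpr hne
    have h3 := h2 1 (by simp only [List.length_cons]; omega)
    rw [show ((1 : Fin 5) :: ℓ).take 1 = [1] from rfl] at h3
    have : exc [(1 : Fin 5)] = 1 := by decide
    omega
  · rintro rfl
    refine ⟨by decide, fun k hk => ?_⟩
    simp only [List.length_cons, List.length_nil] at hk
    have : k = 0 := by omega
    subst this
    simp

lemma Fp_cons0 (ℓ : List (Fin 5)) :
    Fp ((0 : Fin 5) :: ℓ) ↔ (exc ℓ = 2 ∧ ∀ k < ℓ.length, exc (ℓ.take k) ≤ 1) := by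
  unfold Fp
  rw [exc_cons0]
  constructor
  · rintro ⟨h1, h2⟩
    refine ⟨by omega, fun k hk => ?_⟩
    have := h2 (k + 1) (by simp only [List.length_cons]; omega)
    rw [List.take_succ_cons, exc_cons0] at this
    omega
  · rintro ⟨h1, h2⟩
    refine ⟨by omega, fun k hk => ?_⟩
    cases k with
    | zero => simp
    | succ j =>
      rw [List.take_succ_cons, exc_cons0]
      have := h2 j (by simp only [List.length_cons] at hk; omega)
      omega

/-! ### First passage machinery -/

lemma exc_single_le (x : Fin 5) : exc [x] ≤ 1 := by fin_cases x <;> decide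

lemma exists_fp (ℓ : List (Fin 5)) (h : 1 ≤ exc ℓ) :
    ∃ k, k ≤ ℓ.length ∧ exc (ℓ.take k) = 1 := by
  induction ℓ using List.reverseRecOn with
  | nil => simp at h
  | append_singleton l a ih =>
    rcases le_or_gt 1 (exc l) with h' | h'
    · obtain ⟨k, hk, he⟩ := ih h'
      refine ⟨k, by simp only [List.length_append, List.length_cons, List.length_nil]; omega, ?_⟩
      rwa [List.take_append_of_le_length hk]
    · have ha := exc_single_le a
      have hsum := exc_append l [a]
      refine ⟨(l ++ [a]).length, le_rfl, ?_⟩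
      rw [List.take_length]
      omega

lemma find_le_zero (ℓ : List (Fin 5)) (h : ∃ k, k ≤ ℓ.length ∧ exc (ℓ.take k) = 1) :
    ∀ j < Nat.find h, exc (ℓ.take j) ≤ 0 := by
  intro j hj
  by_contra hc
  push_neg at hc
  obtain ⟨k, hk, he⟩ := exists_fp (ℓ.take j) (by omega)
  rw [List.length_take] at hk
  have hkj : k ≤ j := by omega
  rw [List.take_take, min_eq_left hkj] at he
  have hklen : k ≤ ℓ.length := by
    have hfind := (Nat.find_spec h).1
    omega
  exact Nat.find_min h (lt_of_le_of_lt hkj hj) ⟨hklen, he⟩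

lemma find_append (u v : List (Fin 5)) (hu : Fp u)
    (h : ∃ k, k ≤ (u ++ v).length ∧ exc ((u ++ v).take k) = 1) :
    Nat.find h = u.length := by
  rw [Nat.find_eq_iff]
  refine ⟨⟨by simp, by rw [List.take_left]; exact hu.1⟩, ?_⟩
  intro j hj hc
  rw [List.take_append_of_le_length (le_of_lt hj)] at hc
  have := hu.2 j hj
  omega

lemma append_inj (u v u' v' : List (Fin 5)) (hu : Fp u) (hu' : Fp u')
    (heq : u ++ v = u' ++ v') : u = u' ∧ v = v' := by
  have hlen : u.length = u'.length := by
    rcases lt_trichotomy u.length u'.length with hl | hl | hl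
    · exfalso
      have h1 : u'.take u.length = u := by
        rw [← List.take_append_of_le_length (le_of_lt hl), ← heq, List.take_left]
      have h2 := hu'.2 u.length hl
      rw [h1] at h2
      have h3 := hu.1
      omega
    · exact hl
    · exfalso
      have h1 : u.take u'.length = u' := by
        rw [← List.take_append_of_le_length (le_of_lt hl), heq, List.take_left]
      have h2 := hu.2 u'.length hl
      rw [h1] at h2
      have h3 := hu'.1
      omega
  have t1 : (u ++ v).take u.length = u := List.take_left
  have t2 : (u' ++ v').take u.length = u' := List.take_left' hlen.symm
  rw [heq] at t1
  have hu2 : u = u' := t1.symm.trans t2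
  have d1 : (u ++ v).drop u.length = v := List.drop_left
  have d2 : (u' ++ v').drop u.length = v' := List.drop_left' hlen.symm
  rw [heq] at d1
  exact ⟨hu2, d1.symm.trans d2⟩

/-! ### The two splitting identities -/

lemma serA : ser (fun ℓ => exc ℓ = 1) = ser Fp * ser Bal := by
  have hf : Function.Bijective
      (fun p : {u : List (Fin 5) // Fp u} × {v : List (Fin 5) // Bal v} =>
        (⟨p.1.1 ++ p.2.1, by
          have h1 : exc p.1.1 = 1 := p.1.2.1
          have h2 : exc p.2.1 = 0 := p.2.2
          rw [exc_append]; omega⟩ : {ℓ : List (Fin 5) // exc ℓ = 1})) := by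
    constructor
    · rintro ⟨⟨u, hu⟩, ⟨v, hv⟩⟩ ⟨⟨u', hu'⟩, ⟨v', hv'⟩⟩ heq
      simp only [Subtype.mk.injEq] at heq
      obtain ⟨h1, h2⟩ := append_inj u v u' v' hu hu' heq
      subst h1; subst h2; rfl
    · rintro ⟨ℓ, hℓ⟩
      have h : ∃ k, k ≤ ℓ.length ∧ exc (ℓ.take k) = 1 := exists_fp ℓ (by omega)
      have hspec := Nat.find_spec h
      have hle := find_le_zero ℓ h
      refine ⟨(⟨ℓ.take (Nat.find h), ⟨hspec.2, fun j hj => ?_⟩⟩,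
        ⟨ℓ.drop (Nat.find h), ?_⟩), ?_⟩
      · rw [List.length_take] at hj
        have hjk : j < Nat.find h := by omega
        rw [List.take_take, min_eq_left (le_of_lt hjk)]
        exact hle j hjk
      · show exc (ℓ.drop (Nat.find h)) = 0
        have he := exc_append (ℓ.take (Nat.find h)) (ℓ.drop (Nat.find h))
        rw [List.take_append_drop] at he
        have := hspec.2
        omega
      · exact Subtype.ext (List.take_append_drop (Nat.find h) ℓ)
  exact ser_conv Fp Bal _ (Equiv.ofBijective _ hf).symm
    (fun x => congrArg Subtype.val ((Equiv.ofBijective _ hf).apply_symm_apply x))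

lemma serB : ser (fun ℓ => exc ℓ = 2 ∧ ∀ k < ℓ.length, exc (ℓ.take k) ≤ 1)
    = ser Fp * ser Fp := by
  have hf : Function.Bijective
      (fun p : {u : List (Fin 5) // Fp u} × {v : List (Fin 5) // Fp v} =>
        (⟨p.1.1 ++ p.2.1, by
          have h1 : exc p.1.1 = 1 := p.1.2.1
          have h2 : exc p.2.1 = 1 := p.2.2.1
          constructor
          · rw [exc_append]; omega
          · intro j hj
            rw [List.length_append] at hj
            rcases lt_trichotomy j p.1.1.length with hl | hl | hl
            · rw [List.take_append_of_le_length (le_of_lt hl)]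
              have := p.1.2.2 j hl
              omega
            · subst hl
              rw [List.take_left]
              omega
            · rw [List.take_append,
                List.take_of_length_le (le_of_lt hl)]
              rw [exc_append]
              have := p.2.2.2 (j - p.1.1.length) (by omega)
              omega⟩ :
          {ℓ : List (Fin 5) // exc ℓ = 2 ∧ ∀ k < ℓ.length, exc (ℓ.take k) ≤ 1})) := by
    constructor
    · rintro ⟨⟨u, hu⟩, ⟨v, hv⟩⟩ ⟨⟨u', hu'⟩, ⟨v', hv'⟩⟩ heq
      simp only [Subtype.mk.injEq] at heq
      obtain ⟨h1, h2⟩ := append_inj u v u' v' hu hu' heq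
      subst h1; subst h2; rfl
    · rintro ⟨ℓ, h2, hpre⟩
      have h : ∃ k, k ≤ ℓ.length ∧ exc (ℓ.take k) = 1 := exists_fp ℓ (by omega)
      have hspec := Nat.find_spec h
      have hle := find_le_zero ℓ h
      refine ⟨(⟨ℓ.take (Nat.find h), ⟨hspec.2, fun j hj => ?_⟩⟩,
        ⟨ℓ.drop (Nat.find h), ⟨?_, fun j hj => ?_⟩⟩), ?_⟩
      · rw [List.length_take] at hj
        have hjk : j < Nat.find h := by omega
        rw [List.take_take, min_eq_left (le_of_lt hjk)]
        exact hle j hjk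
      · have he := exc_append (ℓ.take (Nat.find h)) (ℓ.drop (Nat.find h))
        rw [List.take_append_drop] at he
        have := hspec.2
        omega
      · rw [List.length_drop] at hj
        have e1 : ℓ.take (Nat.find h + j)
            = ℓ.take (Nat.find h) ++ (ℓ.drop (Nat.find h)).take j :=
          List.take_add
        have e2 := exc_append (ℓ.take (Nat.find h)) ((ℓ.drop (Nat.find h)).take j)
        rw [← e1] at e2
        have hb := hpre (Nat.find h + j) (by omega)
        have := hspec.2
        omega
      · exact Subtype.ext (List.take_append_drop (Nat.find h) ℓ)
  exact ser_conv Fp Fp _ (Equiv.ofBijective _ hf).symm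
    (fun x => congrArg Subtype.val ((Equiv.ofBijective _ hf).apply_symm_apply x))

/-! ### Symmetry between excess `1` and excess `-1` -/

def sw : Fin 5 → Fin 5 := ![1, 0, 2, 3, 4]

lemma sw_invol : ∀ x, sw (sw x) = x := by decide

lemma wt_sw : ∀ x, wt (sw x) = wt x := by decide

lemma sw_inj : Function.Injective sw := by decide

lemma map_sw_invol (ℓ : List (Fin 5)) : (ℓ.map sw).map sw = ℓ := by
  rw [List.map_map, show sw ∘ sw = id from funext sw_invol, List.map_id]

lemma w_map_sw (ℓ : List (Fin 5)) : w (ℓ.map sw) = w ℓ := by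
  unfold w
  rw [List.map_map, show wt ∘ sw = wt from funext wt_sw]

lemma exc_map_sw (ℓ : List (Fin 5)) : exc (ℓ.map sw) = - exc ℓ := by
  unfold exc
  have c1 : (ℓ.map sw).count 1 = ℓ.count 0 := by
    have := List.count_map_of_injective ℓ sw sw_inj 0
    rwa [show sw 0 = 1 from rfl] at this
  have c2 : (ℓ.map sw).count 0 = ℓ.count 1 := by
    have := List.count_map_of_injective ℓ sw sw_inj 1
    rwa [show sw 1 = 0 from rfl] at this
  rw [c1, c2]
  ring

lemma ser_exc_neg1 : ser (fun ℓ => exc ℓ = -1) = ser (fun ℓ => exc ℓ = 1) := by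
  ext n
  have : cnt (fun ℓ => exc ℓ = -1) n = cnt (fun ℓ => exc ℓ = 1) n := by
    apply Nat.card_congr
    refine ⟨fun x => ⟨x.1.map sw, ?_, ?_⟩, fun x => ⟨x.1.map sw, ?_, ?_⟩, ?_, ?_⟩
    · show exc (x.1.map sw) = 1
      rw [exc_map_sw, x.2.1]; norm_num
    · rw [w_map_sw]; exact x.2.2
    · show exc (x.1.map sw) = -1
      rw [exc_map_sw, x.2.1]
    · rw [w_map_sw]; exact x.2.2
    · intro x; exact Subtype.ext (map_sw_invol x.1)
    · intro x; exact Subtype.ext (map_sw_invol x.1)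
  simp [ser, this]

/-! ### The empty-word series -/

lemma ser_eq_nil : ser (fun ℓ : List (Fin 5) => ℓ = []) = 1 := by
  ext n
  have : cnt (fun ℓ : List (Fin 5) => ℓ = []) n = if n = 0 then 1 else 0 := by
    unfold cnt
    split_ifs with h
    · subst h
      haveI : Unique {ℓ : List (Fin 5) // ℓ = [] ∧ w ℓ = 0} :=
        { default := ⟨[], rfl, rfl⟩, uniq := fun a => Subtype.ext a.2.1 }
      exact Nat.card_unique
    · haveI : IsEmpty {ℓ : List (Fin 5) // ℓ = [] ∧ w ℓ = n} :=
        ⟨fun x => h (by rw [← x.2.2, x.2.1, w_nil])⟩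
      exact Nat.card_of_isEmpty
  rw [ser, coeff_mk, this, coeff_one]
  split_ifs <;> simp

/-! ### The functional equations -/

lemma M2 : ser Fp = X ^ 3 + (X + 2 * X ^ 3) * ser Fp + X ^ 3 * (ser Fp * ser Fp) := by
  have h := ser_cons Fp
  rw [Fin.sum_univ_five] at h
  have e0 : ser (fun ℓ => Fp ((0 : Fin 5) :: ℓ)) = ser Fp * ser Fp := by
    rw [ser_congr (fun ℓ => Fp_cons0 ℓ), serB]
  have e1 : ser (fun ℓ => Fp ((1 : Fin 5) :: ℓ)) = 1 := by
    rw [ser_congr (fun ℓ => Fp_cons1 ℓ), ser_eq_nil]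
  have e2 : ser (fun ℓ => Fp ((2 : Fin 5) :: ℓ)) = ser Fp :=
    ser_congr (fun ℓ => Fp_cons_other (by decide) (by decide) ℓ)
  have e3 : ser (fun ℓ => Fp ((3 : Fin 5) :: ℓ)) = ser Fp :=
    ser_congr (fun ℓ => Fp_cons_other (by decide) (by decide) ℓ)
  have e4 : ser (fun ℓ => Fp ((4 : Fin 5) :: ℓ)) = ser Fp :=
    ser_congr (fun ℓ => Fp_cons_other (by decide) (by decide) ℓ)
  rw [e0, e1, e2, e3, e4, if_neg (by simp [Fp]),
    show wt 0 = 3 from rfl, show wt 1 = 3 from rfl, show wt 2 = 1 from rfl,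
    show wt 3 = 3 from rfl, show wt 4 = 3 from rfl] at h
  linear_combination h

lemma M1 : ser Bal = 1 + (X + 2 * X ^ 3) * ser Bal + 2 * (X ^ 3 * (ser Fp * ser Bal)) := by
  have h := ser_cons Bal
  rw [Fin.sum_univ_five] at h
  have e0 : ser (fun ℓ => Bal ((0 : Fin 5) :: ℓ)) = ser Fp * ser Bal := by
    rw [ser_congr (fun ℓ => Bal_cons0 ℓ), serA]
  have e1 : ser (fun ℓ => Bal ((1 : Fin 5) :: ℓ)) = ser Fp * ser Bal := by
    rw [ser_congr (fun ℓ => Bal_cons1 ℓ), ser_exc_neg1, serA]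
  have e2 : ser (fun ℓ => Bal ((2 : Fin 5) :: ℓ)) = ser Bal :=
    ser_congr (fun ℓ => Bal_cons_other (by decide) (by decide) ℓ)
  have e3 : ser (fun ℓ => Bal ((3 : Fin 5) :: ℓ)) = ser Bal :=
    ser_congr (fun ℓ => Bal_cons_other (by decide) (by decide) ℓ)
  have e4 : ser (fun ℓ => Bal ((4 : Fin 5) :: ℓ)) = ser Bal :=
    ser_congr (fun ℓ => Bal_cons_other (by decide) (by decide) ℓ)
  rw [e0, e1, e2, e3, e4, if_pos Bal_nil,
    show wt 0 = 3 from rfl, show wt 1 = 3 from rfl, show wt 2 = 1 from rfl,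
    show wt 3 = 3 from rfl, show wt 4 = 3 from rfl] at h
  linear_combination h

/-! ### Identification of the diagonal -/

@[simp] lemma steps0 : steps 0 = (6, 5) := rfl
@[simp] lemma steps1 : steps 1 = (0, 1) := rfl
@[simp] lemma steps2 : steps 2 = (1, 1) := rfl
@[simp] lemma steps3 : steps 3 = (3, 3) := rfl
@[simp] lemma steps4 : steps 4 = (3, 3) := rfl

lemma sum_map_steps (ℓ : List (Fin 5)) :
    (ℓ.map steps).sum = ((ℓ.map fun i => (steps i).1).sum, (ℓ.map fun i => (steps i).2).sum) := by
  induction ℓ with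
  | nil => rfl
  | cons x t ih => simp [ih, Prod.ext_iff]

lemma lin1 (ℓ : List (Fin 5)) :
    (ℓ.map fun i => (steps i).2).sum + ℓ.count 0
      = (ℓ.map fun i => (steps i).1).sum + ℓ.count 1 := by
  induction ℓ with
  | nil => rfl
  | cons x t ih =>
    simp only [List.map_cons, List.sum_cons, List.count_cons]
    fin_cases x <;> simp <;> omega

lemma lin2 (ℓ : List (Fin 5)) :
    w ℓ + 3 * ℓ.count 0 = (ℓ.map fun i => (steps i).1).sum + 3 * ℓ.count 1 := by
  induction ℓ with
  | nil => rfl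
  | cons x t ih =>
    simp only [List.map_cons, List.sum_cons, List.count_cons, w_cons]
    fin_cases x <;> simp [wt] <;> omega

lemma N_diag (n : ℕ) : N n n = cnt Bal n := by
  unfold N cnt
  apply Nat.card_congr
  apply Equiv.subtypeEquivRight
  intro ℓ
  rw [sum_map_steps, Prod.mk.injEq]
  have l1 := lin1 ℓ
  have l2 := lin2 ℓ
  unfold Bal exc
  constructor
  · rintro ⟨h1, h2⟩
    constructor
    · omega
    · omega
  · rintro ⟨h1, h2⟩
    constructor <;> omega

end DiagAux

theorem diagonal_gen_fun_sq_identity :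
    (PowerSeries.mk fun n => (N n n : ℤ)) ^ 2 *
      (4 * (X : ℤ⟦X⟧) ^ 4 - 4 * X ^ 3 + X ^ 2 - 2 * X + 1) = 1 := by
  have hD : (PowerSeries.mk fun n => (N n n : ℤ)) = DiagAux.ser DiagAux.Bal := by
    ext n
    simp [DiagAux.ser, DiagAux.N_diag]
  rw [hD]
  have R1 := DiagAux.M1
  have R2 := DiagAux.M2
  set D := DiagAux.ser DiagAux.Bal with hDdef
  set F := DiagAux.ser DiagAux.Fp with hFdef
  have h1 : D * (1 - X - 2 * X ^ 3 - 2 * X ^ 3 * F) = 1 := by linear_combination R1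
  have h2 : (1 - X - 2 * X ^ 3 - 2 * X ^ 3 * F) ^ 2
      = 4 * (X : ℤ⟦X⟧) ^ 4 - 4 * X ^ 3 + X ^ 2 - 2 * X + 1 := by
    linear_combination (-4 * (X : ℤ⟦X⟧) ^ 3) * R2
  calc D ^ 2 * (4 * (X : ℤ⟦X⟧) ^ 4 - 4 * X ^ 3 + X ^ 2 - 2 * X + 1)
      = (D * (1 - X - 2 * X ^ 3 - 2 * X ^ 3 * F)) ^ 2 := by rw [← h2]; ring
    _ = 1 := by rw [h1, one_pow]
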